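/- Let n ≥ 3 be an integer with 4 ∣ 3n, let s be a positive integer, and let A : {0,...,n} → ℝ satisfy A_i ≥ 0 for all i, A_0 = 1, ∑_i A_i = 2^s, A_1 = (1/2^s) ∑_i (3n - 4i) A_i, and A_2 = (1/2^s) ∑_i (1/2)((4i - 3n + 1)² - 3n - 1) A_i. Then 2^s ≥ 3n + 4. -/

import Mathlib

theorem lp_hamming_abstract (n : ℕ) (hn : 3 ≤ n) (hdvd : 4 ∣ 3 * n)
    (s : ℕ) (hs : 1 ≤ s) (A : ℕ → ℝ)
    (hA0 : A 0 = 1)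
    (hApos : ∀ i ≤ n, 0 ≤ A i)
    (hAsum : ∑ i ∈ Finset.range (n + 1), A i = 2 ^ s)
    (hA1 : A 1 = (1 / 2 ^ s) * ∑ i ∈ Finset.range (n + 1), (3 * n - 4 * i : ℝ) * A i)
    (hA2 : A 2 = (1 / 2 ^ s) * ∑ i ∈ Finset.range (n + 1),
      (1 / 2) * ((4 * i - 3 * n + 1 : ℝ) ^ 2 - 3 * n - 1) * A i) :
    (2 : ℝ) ^ s ≥ 3 * n + 4 := by
  have hEpos : (0:ℝ) < 2 ^ s := by positivity
  -- 4 ∣ n, so n ≥ 4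
  obtain ⟨m, hm⟩ := hdvd
  have hn4 : 4 ≤ n := by
    have h4n : 4 ∣ n := (Nat.Coprime.dvd_of_dvd_mul_left (by norm_num) ⟨m, hm⟩)
    exact Nat.le_of_dvd (by omega) h4n
  have hmR : (3 * n : ℝ) = 4 * m := by exact_mod_cast hm
  -- pointwise nonnegativity of h(i) = (4i - 3n)(4i - 3n - 4)
  have hpt : ∀ i : ℕ, (0:ℝ) ≤ (4 * i - 3 * n) * (4 * i - 3 * n - 4) := by
    intro i
    rw [hmR]
    rcases le_or_gt i m with h | h
    · have : (i:ℝ) ≤ m := by exact_mod_cast h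
      nlinarith
    · have : (m:ℝ) + 1 ≤ i := by exact_mod_cast h
      nlinarith
  -- key identity
  have h1 : (2:ℝ) ^ s * A 1 = ∑ i ∈ Finset.range (n + 1), (3 * n - 4 * i : ℝ) * A i := by
    rw [hA1]; field_simp
  have h2 : (2:ℝ) ^ s * A 2 = ∑ i ∈ Finset.range (n + 1),
      (1 / 2) * ((4 * i - 3 * n + 1 : ℝ) ^ 2 - 3 * n - 1) * A i := by
    rw [hA2]; field_simp
  have key : ∑ i ∈ Finset.range (n + 1), ((4 * i - 3 * n) * (4 * i - 3 * n - 4) : ℝ) * A i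
      = 2 * ((2:ℝ) ^ s * A 2) + 6 * ((2:ℝ) ^ s * A 1) + 3 * n * (2 ^ s) := by
    rw [h1, h2, ← hAsum, Finset.mul_sum, Finset.mul_sum, Finset.mul_sum,
      ← Finset.sum_add_distrib, ← Finset.sum_add_distrib]
    exact Finset.sum_congr rfl fun i _ => by ring
  -- lower bound by terms 0, 1, 2
  have hsub : ({0, 1, 2} : Finset ℕ) ⊆ Finset.range (n + 1) := by
    intro i hi
    fin_cases hi <;> simp <;> omega
  have hlow : ∑ i ∈ ({0, 1, 2} : Finset ℕ),
        ((4 * i - 3 * n) * (4 * i - 3 * n - 4) : ℝ) * A i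
      ≤ ∑ i ∈ Finset.range (n + 1), ((4 * i - 3 * n) * (4 * i - 3 * n - 4) : ℝ) * A i := by
    apply Finset.sum_le_sum_of_subset_of_nonneg hsub
    intro i hi _
    exact mul_nonneg (hpt i) (hApos i (Nat.lt_succ_iff.mp (Finset.mem_range.mp hi)))
  have hsum012 : ∑ i ∈ ({0, 1, 2} : Finset ℕ),
        ((4 * i - 3 * n) * (4 * i - 3 * n - 4) : ℝ) * A i
      = (3 * n) * (3 * n + 4) * A 0 + (3 * n) * (3 * n - 4) * A 1
        + (3 * n - 8) * (3 * n - 4) * A 2 := by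
    rw [show ({0,1,2} : Finset ℕ) = {0} ∪ {1} ∪ {2} by rfl]
    rw [Finset.sum_union (by decide), Finset.sum_union (by decide)]
    simp
    ring
  have hA1nn : 0 ≤ A 1 := hApos 1 (by omega)
  have hA2nn : 0 ≤ A 2 := hApos 2 (by omega)
  -- final contradiction
  by_contra hcon
  push_neg at hcon
  have hNat : (2:ℕ) ^ s < 3 * n + 4 := by exact_mod_cast hcon
  have hle : ((2:ℝ) ^ s) ≤ 3 * n + 3 := by
    have : (2:ℕ) ^ s ≤ 3 * n + 3 := by omega
    exact_mod_cast this
  have hnR : (4:ℝ) ≤ n := by exact_mod_cast hn4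
  rw [key, hsum012, hA0] at hlow
  nlinarith [mul_nonneg (sub_nonneg.2 hle) hA1nn, mul_nonneg (sub_nonneg.2 hle) hA2nn,
    mul_nonneg (mul_nonneg (sub_nonneg.2 hnR) (sub_nonneg.2 hnR)) hA1nn,
    mul_nonneg (mul_nonneg (sub_nonneg.2 hnR) (sub_nonneg.2 hnR)) hA2nn,
    mul_nonneg (sub_nonneg.2 hnR) hA1nn, mul_nonneg (sub_nonneg.2 hnR) hA2nn,
    hlow]
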